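/- Let B(m,i,j) be the number of doubly alternating Baxter permutations σ of {1,...,2m} with σ(i) = j. Then B(m,i,j) = B(m,j,i) for all m ≥ 1 and i,j ∈ {1,...,2m}. -/

import Mathlib

/-- A permutation of `Fin n` (0-indexed) is a Baxter permutation if there are no
indices `i < j < j+1 ≤ k` with `σ(j+1) < σ(i) < σ(k) < σ(j)` or
`σ(j) < σ(k) < σ(i) < σ(j+1)`. -/
def IsBaxter {n : ℕ} (σ : Equiv.Perm (Fin n)) : Prop :=
  ∀ i j k : Fin n, i < j → ∀ h : (j : ℕ) + 1 ≤ (k : ℕ),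
    ¬ ((σ ⟨(j : ℕ) + 1, lt_of_le_of_lt h k.isLt⟩ < σ i ∧ σ i < σ k ∧ σ k < σ j) ∨
       (σ j < σ k ∧ σ k < σ i ∧ σ i < σ ⟨(j : ℕ) + 1, lt_of_le_of_lt h k.isLt⟩))

lemma transition {P : ℕ → Prop} {p r : ℕ} (hpr : p < r) (hp : P p) (hr : ¬ P r) :
    ∃ j, p ≤ j ∧ j < r ∧ P j ∧ ¬ P (j + 1) := by
  by_contra hc
  push_neg at hc
  have key : ∀ d, p + d ≤ r → P (p + d) := by
    intro d
    induction d with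
    | zero => intro _; simpa using hp
    | succ d ih =>
      intro hd
      have h1 : p + d ≤ r := by omega
      have hPd := ih h1
      have hlt : p + d < r := by
        rcases eq_or_lt_of_le h1 with he | hl
        · exact absurd (he ▸ hPd) hr
        · exact hl
      have h2 := hc (p + d) (by omega) hlt hPd
      have he : p + (d + 1) = (p + d) + 1 := by omega
      rw [he]
      exact h2
  have hfin := key (r - p) (by omega)
  rw [Nat.add_sub_cancel' (le_of_lt hpr)] at hfin
  exact hr hfin

lemma isBaxter_inv {n : ℕ} {σ : Equiv.Perm (Fin n)} (h : IsBaxter σ) : IsBaxter σ⁻¹ := by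
  intro a b c hab hbc hbad
  set b1 : Fin n := ⟨(b : ℕ) + 1, lt_of_le_of_lt hbc c.isLt⟩ with hb1def
  have hb1val : (b1 : ℕ) = (b : ℕ) + 1 := rfl
  have sq' : σ (σ⁻¹ b1) = b1 := Equiv.apply_symm_apply σ b1
  have sp : σ (σ⁻¹ a) = a := Equiv.apply_symm_apply σ a
  have sr : σ (σ⁻¹ c) = c := Equiv.apply_symm_apply σ c
  have sq : σ (σ⁻¹ b) = b := Equiv.apply_symm_apply σ b
  have eq' : ((σ (σ⁻¹ b1) : Fin n) : ℕ) = (b : ℕ) + 1 := by rw [sq']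
  have eqb : ((σ (σ⁻¹ b) : Fin n) : ℕ) = (b : ℕ) := by rw [sq]
  rcases hbad with ⟨h1, h2, h3⟩ | ⟨h1, h2, h3⟩
  · -- positions q' < p < r < q ; values b+1, a, c, b
    rw [Fin.lt_def] at h1 h2 h3 hab
    have hcb1 : (c : ℕ) ≠ (b : ℕ) + 1 := by
      intro he
      have hcc : c = b1 := Fin.ext (by simpa [hb1val] using he)
      rw [hcc] at h2
      omega
    have hrn : ((σ⁻¹ c : Fin n) : ℕ) < n := (σ⁻¹ c).isLt
    obtain ⟨j, hj1, hj2, hj3, hj4⟩ :=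
      transition (P := fun t => ∀ ht : t < n, ((σ ⟨t, ht⟩ : Fin n) : ℕ) < (b : ℕ))
        h2
        (fun ht => by
          have he : (⟨((σ⁻¹ a : Fin n) : ℕ), ht⟩ : Fin n) = σ⁻¹ a := Fin.ext rfl
          rw [he, sp]; exact hab)
        (fun hP => by
          have hx := hP hrn
          have he : (⟨((σ⁻¹ c : Fin n) : ℕ), hrn⟩ : Fin n) = σ⁻¹ c := Fin.ext rfl
          rw [he, sr] at hx
          omega)
    have hjn : j < n := lt_trans hj2 hrn
    have hj1n : j + 1 < n := lt_of_le_of_lt (Nat.succ_le_of_lt hj2) hrn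
    have vJ : ((σ ⟨j, hjn⟩ : Fin n) : ℕ) < (b : ℕ) := hj3 hjn
    have hne : ¬ (((σ ⟨j + 1, hj1n⟩ : Fin n) : ℕ) < (b : ℕ)) :=
      fun hh => hj4 (fun ht => hh)
    clear hj4 hj3
    have vJ1ge : (b : ℕ) ≤ ((σ ⟨j + 1, hj1n⟩ : Fin n) : ℕ) := by omega
    have vJ1b : ((σ ⟨j + 1, hj1n⟩ : Fin n) : ℕ) ≠ (b : ℕ) := by
      intro he
      have h5 : σ ⟨j + 1, hj1n⟩ = b := Fin.ext he
      have h6 : (⟨j + 1, hj1n⟩ : Fin n) = σ⁻¹ b := by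
        rw [← h5]; exact (Equiv.symm_apply_apply σ _).symm
      have hv : j + 1 = ((σ⁻¹ b : Fin n) : ℕ) := by rw [← h6]
      omega
    have vJ1b1 : ((σ ⟨j + 1, hj1n⟩ : Fin n) : ℕ) ≠ (b : ℕ) + 1 := by
      intro he
      have h5 : σ ⟨j + 1, hj1n⟩ = b1 := Fin.ext (by rw [he, hb1val])
      have h6 : (⟨j + 1, hj1n⟩ : Fin n) = σ⁻¹ b1 := by
        rw [← h5]; exact (Equiv.symm_apply_apply σ _).symm
      have hv : j + 1 = ((σ⁻¹ b1 : Fin n) : ℕ) := by rw [← h6]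
      omega
    refine h (σ⁻¹ b1) ⟨j, hjn⟩ (σ⁻¹ b) (Fin.lt_def.mpr (by simp only [] ; omega))
      (by show j + 1 ≤ ((σ⁻¹ b : Fin n) : ℕ); omega) (Or.inr ⟨?_, ?_, ?_⟩)
    · exact Fin.lt_def.mpr (show ((σ ⟨j, hjn⟩ : Fin n) : ℕ) < ((σ (σ⁻¹ b) : Fin n) : ℕ) by omega)
    · exact Fin.lt_def.mpr (show ((σ (σ⁻¹ b) : Fin n) : ℕ) < ((σ (σ⁻¹ b1) : Fin n) : ℕ) by omega)
    · exact Fin.lt_def.mpr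
        (show ((σ (σ⁻¹ b1) : Fin n) : ℕ) < ((σ ⟨j + 1, hj1n⟩ : Fin n) : ℕ) by omega)
  · -- positions q < r < p < q' ; values b, c, a, b+1
    rw [Fin.lt_def] at h1 h2 h3 hab
    have hcb1 : (c : ℕ) ≠ (b : ℕ) + 1 := by
      intro he
      have hcc : c = b1 := Fin.ext (by simpa [hb1val] using he)
      rw [hcc] at h2
      omega
    have hpn : ((σ⁻¹ a : Fin n) : ℕ) < n := (σ⁻¹ a).isLt
    obtain ⟨j, hj1, hj2, hj3, hj4⟩ :=
      transition (P := fun t => ∀ ht : t < n, (b : ℕ) + 1 < ((σ ⟨t, ht⟩ : Fin n) : ℕ))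
        h2
        (fun ht => by
          have he : (⟨((σ⁻¹ c : Fin n) : ℕ), ht⟩ : Fin n) = σ⁻¹ c := Fin.ext rfl
          rw [he, sr]; omega)
        (fun hP => by
          have hx := hP hpn
          have he : (⟨((σ⁻¹ a : Fin n) : ℕ), hpn⟩ : Fin n) = σ⁻¹ a := Fin.ext rfl
          rw [he, sp] at hx
          omega)
    have hjn : j < n := lt_trans hj2 hpn
    have hj1n : j + 1 < n := lt_of_le_of_lt (Nat.succ_le_of_lt hj2) hpn
    have vJ : (b : ℕ) + 1 < ((σ ⟨j, hjn⟩ : Fin n) : ℕ) := hj3 hjn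
    have hne : ¬ ((b : ℕ) + 1 < ((σ ⟨j + 1, hj1n⟩ : Fin n) : ℕ)) :=
      fun hh => hj4 (fun ht => hh)
    clear hj4 hj3
    have vJ1le : ((σ ⟨j + 1, hj1n⟩ : Fin n) : ℕ) ≤ (b : ℕ) + 1 := by omega
    have vJ1b : ((σ ⟨j + 1, hj1n⟩ : Fin n) : ℕ) ≠ (b : ℕ) := by
      intro he
      have h5 : σ ⟨j + 1, hj1n⟩ = b := Fin.ext he
      have h6 : (⟨j + 1, hj1n⟩ : Fin n) = σ⁻¹ b := by
        rw [← h5]; exact (Equiv.symm_apply_apply σ _).symm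
      have hv : j + 1 = ((σ⁻¹ b : Fin n) : ℕ) := by rw [← h6]
      omega
    have vJ1b1 : ((σ ⟨j + 1, hj1n⟩ : Fin n) : ℕ) ≠ (b : ℕ) + 1 := by
      intro he
      have h5 : σ ⟨j + 1, hj1n⟩ = b1 := Fin.ext (by rw [he, hb1val])
      have h6 : (⟨j + 1, hj1n⟩ : Fin n) = σ⁻¹ b1 := by
        rw [← h5]; exact (Equiv.symm_apply_apply σ _).symm
      have hv : j + 1 = ((σ⁻¹ b1 : Fin n) : ℕ) := by rw [← h6]
      omega
    refine h (σ⁻¹ b) ⟨j, hjn⟩ (σ⁻¹ b1) (Fin.lt_def.mpr (by simp only []; omega))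
      (by show j + 1 ≤ ((σ⁻¹ b1 : Fin n) : ℕ); omega) (Or.inl ⟨?_, ?_, ?_⟩)
    · exact Fin.lt_def.mpr
        (show ((σ ⟨j + 1, hj1n⟩ : Fin n) : ℕ) < ((σ (σ⁻¹ b) : Fin n) : ℕ) by omega)
    · exact Fin.lt_def.mpr (show ((σ (σ⁻¹ b) : Fin n) : ℕ) < ((σ (σ⁻¹ b1) : Fin n) : ℕ) by omega)
    · exact Fin.lt_def.mpr
        (show ((σ (σ⁻¹ b1) : Fin n) : ℕ) < ((σ ⟨j, hjn⟩ : Fin n) : ℕ) by omega)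

/-- A permutation is alternating: ascents at even (0-indexed) positions,
descents at odd positions, i.e. `σ(1) < σ(2) > σ(3) < σ(4) > ⋯` in 1-indexed terms. -/
def IsAlternating {n : ℕ} (σ : Equiv.Perm (Fin n)) : Prop :=
  ∀ i : Fin n, ∀ h : (i : ℕ) + 1 < n,
    (Even (i : ℕ) → σ i < σ ⟨(i : ℕ) + 1, h⟩) ∧
    (Odd (i : ℕ) → σ ⟨(i : ℕ) + 1, h⟩ < σ i)

/-- Reverse-alternating: `σ(1) > σ(2) < σ(3) > ⋯` in 1-indexed terms. -/
def IsRevAlternating {n : ℕ} (σ : Equiv.Perm (Fin n)) : Prop :=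
  ∀ i : Fin n, ∀ h : (i : ℕ) + 1 < n,
    (Even (i : ℕ) → σ ⟨(i : ℕ) + 1, h⟩ < σ i) ∧
    (Odd (i : ℕ) → σ i < σ ⟨(i : ℕ) + 1, h⟩)

/-- Doubly alternating Baxter permutation. -/
def IsDAB {n : ℕ} (σ : Equiv.Perm (Fin n)) : Prop :=
  IsBaxter σ ∧ IsAlternating σ ∧ IsAlternating σ⁻¹

/-- `B(m,i,j)`: the number of doubly alternating Baxter permutations of `{1,…,2m}`
with `σ(i) = j` (here `i, j` are 1-indexed). -/
noncomputable def dabCount (m i j : ℕ) : ℕ :=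
  Nat.card {σ : Equiv.Perm (Fin (2 * m)) //
    IsDAB σ ∧ ∃ hi : i - 1 < 2 * m, ((σ ⟨i - 1, hi⟩ : Fin (2 * m)) : ℕ) = j - 1}

lemma dab_flip {m i j : ℕ} (hm : 1 ≤ m) (hi1 : 1 ≤ i) (hi2 : i ≤ 2 * m)
    (hj1 : 1 ≤ j) (hj2 : j ≤ 2 * m) (σ : Equiv.Perm (Fin (2 * m)))
    (h : IsDAB σ ∧ ∃ hi : i - 1 < 2 * m, ((σ ⟨i - 1, hi⟩ : Fin (2 * m)) : ℕ) = j - 1) :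
    IsDAB σ⁻¹ ∧ ∃ hj : j - 1 < 2 * m, ((σ⁻¹ ⟨j - 1, hj⟩ : Fin (2 * m)) : ℕ) = i - 1 := by
  obtain ⟨⟨hB, hA, hA'⟩, hi, hval⟩ := h
  have hj : j - 1 < 2 * m := by omega
  refine ⟨⟨isBaxter_inv hB, hA', by simpa using hA⟩, hj, ?_⟩
  have h1 : σ ⟨i - 1, hi⟩ = ⟨j - 1, hj⟩ := Fin.ext hval
  have h2 : σ⁻¹ ⟨j - 1, hj⟩ = ⟨i - 1, hi⟩ := by
    rw [← h1]; exact Equiv.symm_apply_apply σ _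
  rw [h2]

theorem dabCount_symm_diag (m i j : ℕ) (hm : 1 ≤ m) (hi1 : 1 ≤ i) (hi2 : i ≤ 2 * m)
    (hj1 : 1 ≤ j) (hj2 : j ≤ 2 * m) : dabCount m i j = dabCount m j i := by
  unfold dabCount
  exact Nat.card_congr
    { toFun := fun x => ⟨x.1⁻¹, dab_flip hm hi1 hi2 hj1 hj2 x.1 x.2⟩
      invFun := fun x => ⟨x.1⁻¹, dab_flip hm hj1 hj2 hi1 hi2 x.1 x.2⟩
      left_inv := fun x => Subtype.ext (inv_inv x.1)
      right_inv := fun x => Subtype.ext (inv_inv x.1) }
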